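/- Let g₁, g₂, h₁, h₂ : S → ℝ be functions on a finite set S of size m. For each pair (p, q) ∈ S² for which the equation λ·g₁(p) + (1−λ)·g₂(p) = λ·g₁(q) + (1−λ)·g₂(q) has a unique solution λ ∈ [0,1], record that solution as a threshold. Then the set of λ ∈ [0,1] at which the total (pre)order on S induced by λ·g₁ + (1−λ)·g₂ changes is contained in this set of at most binom(m,2) thresholds; in particular, [0,1] is partitioned into at most binom(m,2) + 1 intervals on each of which the induced ordering of S is constant. -/

import Mathlib

/-- For scores `s_l p = l * g₁ p + (1-l) * g₂ p` on a finite set `S` of size `m`, there is a set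
of at most `binom(m,2)` thresholds in `[0,1]` such that on any subinterval of `[0,1]` containing
no threshold, the induced total preorder on `S` is constant. -/
theorem stmt8 {S : Type*} [Fintype S] (m : ℕ) (hm : Fintype.card S = m)
    (g1 g2 : S → ℝ) :
    ∃ Th : Finset ℝ, Th.card ≤ m.choose 2 ∧ (↑Th : Set ℝ) ⊆ Set.Icc 0 1 ∧
      ∀ l mu : ℝ, l ∈ Set.Icc (0:ℝ) 1 → mu ∈ Set.Icc (0:ℝ) 1 → l ≤ mu →
        (∀ t ∈ Th, t ∉ Set.Icc l mu) →
        ∀ p q : S,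
          (l * g1 p + (1 - l) * g2 p ≤ l * g1 q + (1 - l) * g2 q ↔
           mu * g1 p + (1 - mu) * g2 p ≤ mu * g1 q + (1 - mu) * g2 q) := by
  classical
  set r : S → S → ℝ := fun p q =>
    max 0 (min 1 ((g2 p - g2 q) / ((g2 p - g2 q) - (g1 p - g1 q)))) with hrdef
  have hsymm : ∀ p q, r p q = r q p := by
    intro p q
    have : (g2 q - g2 p) / ((g2 q - g2 p) - (g1 q - g1 p))
        = (g2 p - g2 q) / ((g2 p - g2 q) - (g1 p - g1 q)) := by
      rw [show g2 q - g2 p = -(g2 p - g2 q) by ring,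
        show -(g2 p - g2 q) - (g1 q - g1 p) = -((g2 p - g2 q) - (g1 p - g1 q)) by ring,
        neg_div_neg_eq]
    simp only [hrdef, this]
  set f : Sym2 S → ℝ := Sym2.lift ⟨r, hsymm⟩ with hfdef
  refine ⟨Finset.image (fun s : {s : Sym2 S // ¬ s.IsDiag} => f s.1) Finset.univ, ?_, ?_, ?_⟩
  · calc (Finset.image (fun s : {s : Sym2 S // ¬ s.IsDiag} => f s.1) Finset.univ).card
        ≤ (Finset.univ : Finset {s : Sym2 S // ¬ s.IsDiag}).card := Finset.card_image_le
      _ = m.choose 2 := by rw [Finset.card_univ, Sym2.card_subtype_not_diag, hm]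
  · intro x hx
    simp only [Finset.coe_image, Set.mem_image] at hx
    obtain ⟨s, _, rfl⟩ := hx
    obtain ⟨⟨p, q⟩, hrep⟩ := Quot.exists_rep s.1
    have : f s.1 = r p q := by rw [← hrep]; rfl
    rw [this]
    constructor
    · exact le_max_left _ _
    · exact max_le (by norm_num) (min_le_left _ _)
  · intro l mu hl hmu hlmu hTh p q
    by_cases hpq : p = q
    · subst hpq; simp
    · have hmem : r p q ∈ Finset.image (fun s : {s : Sym2 S // ¬ s.IsDiag} => f s.1)
          Finset.univ := by
        refine Finset.mem_image.2 ⟨⟨s(p, q), by simp [hpq]⟩, Finset.mem_univ _, ?_⟩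
        rfl
      have hnot := hTh _ hmem
      set a : ℝ := g1 p - g1 q with ha
      set b : ℝ := g2 p - g2 q with hb
      by_cases hab : a = b
      · constructor <;> intro h <;> nlinarith [h]
      · have hba : b - a ≠ 0 := sub_ne_zero.2 (Ne.symm hab)
        set l0 : ℝ := b / (b - a) with hl0
        have key : ∀ x : ℝ, (x * g1 p + (1 - x) * g2 p ≤ x * g1 q + (1 - x) * g2 q)
            ↔ (a - b) * (x - l0) ≤ 0 := by
          intro x
          rw [← sub_nonpos]
          have : x * g1 p + (1 - x) * g2 p - (x * g1 q + (1 - x) * g2 q)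
              = (a - b) * (x - l0) := by
            have hba' : g2 p - g2 q - (g1 p - g1 q) ≠ 0 := hba
            rw [hl0, ha, hb]; field_simp; ring
          rw [this]
        rw [key l, key mu]
        have hside : l0 < l ∨ mu < l0 := by
          rcases lt_or_ge l0 0 with h0 | h0
          · exact Or.inl (lt_of_lt_of_le h0 hl.1)
          · rcases lt_or_ge 1 l0 with h1 | h1
            · exact Or.inr (lt_of_le_of_lt hmu.2 h1)
            · have hclamp : r p q = l0 := by
                simp only [hrdef]
                rw [max_eq_right, min_eq_right h1]
                exact le_min (by norm_num) h0
              rw [hclamp, Set.mem_Icc, not_and_or, not_le, not_le] at hnot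
              tauto
        rcases hside with hs | hs
        · have h1 : 0 < l - l0 := by linarith
          have h2 : 0 < mu - l0 := by linarith
          constructor <;> intro h
          · have hab2 : a - b ≤ 0 := by nlinarith
            exact mul_nonpos_iff.2 (Or.inr ⟨hab2, le_of_lt h2⟩)
          · have hab2 : a - b ≤ 0 := by nlinarith
            exact mul_nonpos_iff.2 (Or.inr ⟨hab2, le_of_lt h1⟩)
        · have h1 : l - l0 < 0 := by linarith
          have h2 : mu - l0 < 0 := by linarith
          constructor <;> intro h
          · have hab2 : 0 ≤ a - b := by nlinarith
            exact mul_nonpos_iff.2 (Or.inl ⟨hab2, le_of_lt h2⟩)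
          · have hab2 : 0 ≤ a - b := by nlinarith
            exact mul_nonpos_iff.2 (Or.inl ⟨hab2, le_of_lt h1⟩)
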